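/- Let Γ = (X,d) be a metric space. If for every q ∈ [0,1] the matrix (q^{d(x,y)})_{x,y∈X} is positive semidefinite, then d is a negative definite kernel on X: ∑_{x,y} conj(f(x)) f(y) d(x,y) ≤ 0 for every finitely supported f : X → ℂ with ∑_x f(x) = 0. -/

import Mathlib

open scoped ComplexOrder

/-- A real-valued kernel `d` is negative definite if the associated quadratic form is
nonpositive on finitely supported functions summing to zero. -/
def NegDefKer {X : Type*} (d : X → X → ℝ) : Prop :=
  ∀ f : X →₀ ℂ, (∑ x ∈ f.support, f x) = 0 →
    ∑ x ∈ f.support, ∑ y ∈ f.support,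
      (starRingEnd ℂ) (f x) * f y * ((d x y : ℝ) : ℂ) ≤ 0

private lemma re_mul_ofReal (z : ℂ) (r : ℝ) : (z * (r : ℂ)).re = z.re * r := by
  simp [Complex.mul_re]

theorem stmt11 {X : Type*} [MetricSpace X]
    (hpsd : ∀ q ∈ Set.Icc (0 : ℝ) 1, ∀ f : X →₀ ℂ,
      0 ≤ ∑ x ∈ f.support, ∑ y ∈ f.support,
        (starRingEnd ℂ) (f x) * f y * ((q ^ dist x y : ℝ) : ℂ)) :
    NegDefKer (fun x y : X => dist x y) := by
  intro f hf
  set s := f.support with hs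
  set a : X → X → ℝ := fun x y => ((starRingEnd ℂ) (f x) * f y).re with ha
  set h : ℝ → ℝ := fun q => ∑ x ∈ s, ∑ y ∈ s, a x y * q ^ dist x y with hh
  have hr : ∀ q : ℝ, (∑ x ∈ s, ∑ y ∈ s,
      (starRingEnd ℂ) (f x) * f y * ((q ^ dist x y : ℝ) : ℂ)).re = h q := by
    intro q
    rw [Complex.re_sum]
    exact Finset.sum_congr rfl fun x _ => by
      rw [Complex.re_sum]
      exact Finset.sum_congr rfl fun y _ => re_mul_ofReal _ _
  have hpos : ∀ q ∈ Set.Ioo (0 : ℝ) 1, 0 ≤ h q := by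
    intro q hq
    have h0 := hpsd q ⟨hq.1.le, hq.2.le⟩ f
    have := (Complex.le_def.mp h0).1
    rwa [Complex.zero_re, hr q] at this
  -- sum of coefficients is zero
  have hsum : ∑ x ∈ s, ∑ y ∈ s, (starRingEnd ℂ) (f x) * f y = 0 := by
    rw [← Finset.sum_mul_sum, ← map_sum, hf]
    simp
  have h1 : h 1 = 0 := by
    have : h 1 = (∑ x ∈ s, ∑ y ∈ s, (starRingEnd ℂ) (f x) * f y).re := by
      rw [Complex.re_sum]
      refine Finset.sum_congr rfl fun x _ => ?_
      rw [Complex.re_sum]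
      refine Finset.sum_congr rfl fun y _ => ?_
      simp [ha, Real.one_rpow]
    rw [this, hsum, Complex.zero_re]
  have hderiv : HasDerivAt h (∑ x ∈ s, ∑ y ∈ s, a x y * dist x y) 1 := by
    refine HasDerivAt.fun_sum fun x _ => HasDerivAt.fun_sum fun y _ => ?_
    have := (Real.hasDerivAt_rpow_const (x := (1 : ℝ)) (p := dist x y)
      (Or.inl one_ne_zero)).const_mul (a x y)
    simpa [Real.one_rpow] using this
  have hten : Filter.Tendsto (slope h 1) (nhdsWithin 1 (Set.Iio 1))
      (nhds (∑ x ∈ s, ∑ y ∈ s, a x y * dist x y)) :=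
    (hasDerivAt_iff_tendsto_slope.mp hderiv).mono_left
      (nhdsWithin_mono _ fun x hx => ne_of_lt hx)
  have hTle : (∑ x ∈ s, ∑ y ∈ s, a x y * dist x y) ≤ 0 := by
    refine le_of_tendsto hten ?_
    filter_upwards [Ioo_mem_nhdsLT_of_mem (Set.mem_Ioc.mpr ⟨zero_lt_one, le_refl (1:ℝ)⟩)]
      with q hq
    rw [slope_def_field, h1, sub_zero]
    exact div_nonpos_of_nonneg_of_nonpos (hpos q hq) (by linarith [hq.2])
  -- conclude
  have hconj : (starRingEnd ℂ) (∑ x ∈ s, ∑ y ∈ s,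
      (starRingEnd ℂ) (f x) * f y * ((dist x y : ℝ) : ℂ)) =
      ∑ x ∈ s, ∑ y ∈ s, (starRingEnd ℂ) (f x) * f y * ((dist x y : ℝ) : ℂ) := by
    simp only [map_sum, map_mul, Complex.conj_conj, Complex.conj_ofReal]
    rw [Finset.sum_comm]
    exact Finset.sum_congr rfl fun x _ => Finset.sum_congr rfl fun y _ => by
      rw [dist_comm]; ring
  rw [Complex.le_def]
  constructor
  · rw [Complex.zero_re]
    rw [show (∑ x ∈ s, ∑ y ∈ s,
        (starRingEnd ℂ) (f x) * f y * ((dist x y : ℝ) : ℂ)).re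
        = ∑ x ∈ s, ∑ y ∈ s, a x y * dist x y from ?_]
    · exact hTle
    · rw [Complex.re_sum]
      exact Finset.sum_congr rfl fun x _ => by
        rw [Complex.re_sum]
        exact Finset.sum_congr rfl fun y _ => re_mul_ofReal _ _
  · rw [Complex.zero_im]
    exact (Complex.conj_eq_iff_im.mp hconj)
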